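/- Let κ be a cardinal number with uncountable cofinality and let X be any Banach space. Then the set 𝒮_{ℓ_1(κ)}(X) is σ-SOT closed in B(X): if (T_n) is a sequence in 𝒮_{ℓ_1(κ)}(X) which SOT-converges to some T ∈ B(X), then T ∈ 𝒮_{ℓ_1(κ)}(X). -/

import Mathlib

noncomputable section

open scoped ENNReal NNReal

/-- The space `ℓ_p(ι)` of `p`-summable real families indexed by `ι`, as a type.
For `p = ∞` this is the space of bounded families with the supremum norm. -/
abbrev ellp (ι : Type*) (p : ℝ≥0∞) : Type _ := lp (fun _ : ι => ℝ) p

/-- The standard unit vector `e_α` of `ℓ_p(ι)`. -/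
def stdVec (ι : Type*) (p : ℝ≥0∞) (α : ι) : ellp ι p :=
  letI := Classical.decEq ι
  lp.single p α 1

/-- `c₀(ι)`, realised as the submodule of `ℓ∞(ι)` consisting of those families `f` such
that `{i | ε ≤ |f i|}` is finite for every `ε > 0`; it carries the supremum norm. -/
def c0Submodule (ι : Type*) : Submodule ℝ (ellp ι ∞) where
  carrier := {f | ∀ ε : ℝ, 0 < ε → {i : ι | ε ≤ |f i|}.Finite}
  zero_mem' := by
    intro ε hε
    have h : {i : ι | ε ≤ |(0 : ellp ι ∞) i|} = ∅ := by
      ext i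
      simp [lp.coeFn_zero, (not_le.mpr hε)]
    rw [h]
    exact Set.finite_empty
  add_mem' := by
    intro f g hf hg ε hε
    have h2 : 0 < ε / 2 := by linarith
    refine ((hf _ h2).union (hg _ h2)).subset ?_
    intro i hi
    simp only [Set.mem_setOf_eq, lp.coeFn_add, Pi.add_apply] at hi
    by_contra hcon
    simp only [Set.mem_union, Set.mem_setOf_eq, not_or, not_le] at hcon
    have habs : |f i + g i| ≤ |f i| + |g i| := abs_add_le _ _
    linarith [hcon.1, hcon.2]
  smul_mem' := by
    intro c f hf ε hε
    rcases eq_or_ne c 0 with rfl | hc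
    · have h : {i : ι | ε ≤ |((0 : ℝ) • f) i|} = ∅ := by
        ext i
        simp [zero_smul, (not_le.mpr hε)]
      rw [h]
      exact Set.finite_empty
    · have hcpos : 0 < |c| := abs_pos.2 hc
      refine (hf (ε / |c|) (by positivity)).subset ?_
      intro i hi
      simp only [Set.mem_setOf_eq, lp.coeFn_smul, Pi.smul_apply, smul_eq_mul, abs_mul] at hi
      simp only [Set.mem_setOf_eq]
      rw [div_le_iff₀ hcpos]
      linarith [hi, mul_comm (|c|) (|f i|)]

/-- The Banach space `c₀(ι)` with the supremum norm. -/
abbrev c0Space (ι : Type*) : Type _ := ↥(c0Submodule ι)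

/-- `ℓ∞^c(ι)`: the submodule of `ℓ∞(ι)` of countably supported bounded families,
with the supremum norm. -/
def lInftyCSubmodule (ι : Type*) : Submodule ℝ (ellp ι ∞) where
  carrier := {f | {i : ι | f i ≠ 0}.Countable}
  zero_mem' := by
    have h : {i : ι | (0 : ellp ι ∞) i ≠ 0} = ∅ := by
      ext i
      simp [lp.coeFn_zero]
    rw [Set.mem_setOf_eq, h]
    exact Set.countable_empty
  add_mem' := by
    intro f g hf hg
    refine (hf.union hg).mono ?_
    intro i hi
    simp only [Set.mem_setOf_eq, lp.coeFn_add, Pi.add_apply] at hi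
    by_contra hcon
    simp only [Set.mem_union, Set.mem_setOf_eq, not_or, not_not] at hcon
    rw [hcon.1, hcon.2, add_zero] at hi
    exact hi rfl
  smul_mem' := by
    intro c f hf
    refine hf.mono ?_
    intro i hi
    simp only [Set.mem_setOf_eq, lp.coeFn_smul, Pi.smul_apply, smul_eq_mul] at hi
    simp only [Set.mem_setOf_eq]
    intro h
    rw [h, mul_zero] at hi
    exact hi rfl

/-- The Banach space `ℓ∞^c(ι)` with the supremum norm. -/
abbrev lInftyCSpace (ι : Type*) : Type _ := ↥(lInftyCSubmodule ι)

lemma stdVec_mem_c0 (ι : Type*) (α : ι) : stdVec ι ∞ α ∈ c0Submodule ι := by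
  letI := Classical.decEq ι
  intro ε hε
  refine (Set.finite_singleton α).subset ?_
  intro i hi
  simp only [Set.mem_setOf_eq] at hi
  simp only [Set.mem_singleton_iff]
  by_contra h
  rw [stdVec] at hi
  rw [lp.single_apply_ne _ _ _ h] at hi
  simp at hi
  linarith

lemma stdVec_mem_lInftyC (ι : Type*) (α : ι) : stdVec ι ∞ α ∈ lInftyCSubmodule ι := by
  letI := Classical.decEq ι
  refine (Set.countable_singleton α).mono ?_
  intro i hi
  simp only [Set.mem_setOf_eq] at hi
  simp only [Set.mem_singleton_iff]
  by_contra h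
  rw [stdVec, lp.single_apply_ne _ _ _ h] at hi
  exact hi rfl

/-- The standard unit vector `e_α` of `c₀(ι)`. -/
def c0Vec (ι : Type*) (α : ι) : c0Space ι := ⟨stdVec ι ∞ α, stdVec_mem_c0 ι α⟩

/-- The standard unit vector `e_α` of `ℓ∞^c(ι)`. -/
def lInftyCVec (ι : Type*) (α : ι) : lInftyCSpace ι := ⟨stdVec ι ∞ α, stdVec_mem_lInftyC ι α⟩

/-- `T` preserves an isomorphic copy of `Z`: there is a closed subspace `W` of `X`,
isomorphic to `Z`, on which `T` is bounded below. -/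
def PreservesCopy {X : Type*} [NormedAddCommGroup X] [NormedSpace ℝ X]
    (Z : Type*) [NormedAddCommGroup Z] [NormedSpace ℝ Z] (T : X →L[ℝ] X) : Prop :=
  ∃ W : Submodule ℝ X, IsClosed (W : Set X) ∧ Nonempty (W ≃L[ℝ] Z) ∧
    ∃ γ : ℝ, 0 < γ ∧ ∀ w ∈ W, γ * ‖w‖ ≤ ‖T w‖

/-- The set `𝒮_Z(X)` of `Z`-singular operators on `X`. -/
def SZ (Z : Type*) [NormedAddCommGroup Z] [NormedSpace ℝ Z]
    (X : Type*) [NormedAddCommGroup X] [NormedSpace ℝ X] : Set (X →L[ℝ] X) :=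
  {T | ¬ PreservesCopy Z T}

/-- A sequence of operators SOT-converges to `T₀` if it converges pointwise in norm. -/
def SOTConvergesTo {X : Type*} [NormedAddCommGroup X] [NormedSpace ℝ X]
    (T : ℕ → X →L[ℝ] X) (T₀ : X →L[ℝ] X) : Prop :=
  ∀ x : X, Filter.Tendsto (fun n => T n x) Filter.atTop (nhds (T₀ x))

/-- An M-basis `(b_j, f_j)_{j ∈ J}` for a Banach space `X`: a biorthogonal system which is
fundamental (the span of the `b_j` is dense) and total (the span of the `f_j` is
weak*-dense in the dual). -/
structure IsMBasis {X : Type*} [NormedAddCommGroup X] [NormedSpace ℝ X] {J : Type*}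
    (b : J → X) (f : J → X →L[ℝ] ℝ) : Prop where
  biorth_self : ∀ j, f j (b j) = 1
  biorth_ne : ∀ i j, i ≠ j → f j (b i) = 0
  fundamental : Dense (Submodule.span ℝ (Set.range b) : Set X)
  total : Dense ((Submodule.span ℝ (Set.range fun j => (f j : WeakDual ℝ X)) :
    Submodule ℝ (WeakDual ℝ X)) : Set (WeakDual ℝ X))

/-- A family `(x_α)` in `X` is equivalent to the standard unit vector basis of `ℓ_q(ι)`
(with `q` a real exponent). -/
def IsLpBasisEquiv {X ι : Type*} [NormedAddCommGroup X] [NormedSpace ℝ X]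
    (x : ι → X) (q : ℝ) : Prop :=
  ∃ c C : ℝ, 0 < c ∧ 0 < C ∧ ∀ a : ι →₀ ℝ,
    c * (∑ α ∈ a.support, |a α| ^ q) ^ (1 / q) ≤ ‖a.sum fun α r => r • x α‖ ∧
      ‖a.sum fun α r => r • x α‖ ≤ C * (∑ α ∈ a.support, |a α| ^ q) ^ (1 / q)

/-- A family `(x_α)` in `X` is equivalent to the standard unit vector basis of `c₀(ι)`. -/
def IsC0BasisEquiv {X ι : Type*} [NormedAddCommGroup X] [NormedSpace ℝ X]
    (x : ι → X) : Prop :=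
  ∃ c C : ℝ, 0 < c ∧ 0 < C ∧ ∀ a : ι →₀ ℝ,
    c * ((a.support.sup fun α => ‖a α‖₊) : ℝ≥0) ≤ ‖a.sum fun α r => r • x α‖ ∧
      ‖a.sum fun α r => r • x α‖ ≤ C * ((a.support.sup fun α => ‖a α‖₊) : ℝ≥0)

universe u v w x

section AuxCard

lemma exists_big_fiber {ι : Type v} (hκ : Cardinal.aleph0 < (Cardinal.mk ι).ord.cof)
    (n : ι → ℕ) : ∃ k : ℕ, Nonempty (ι ≃ {α : ι // n α = k}) := by
  by_contra h
  push_neg at h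
  have haleph : Cardinal.aleph0 ≤ Cardinal.mk ι :=
    (hκ.trans_le (Ordinal.cof_ord_le _)).le
  have hlt : ∀ k : ℕ, Cardinal.mk {α : ι // n α = k} < Cardinal.mk ι := by
    intro k
    refine lt_of_le_of_ne (Cardinal.mk_subtype_le _) ?_
    intro he
    exact (h k).false (Cardinal.eq.mp he.symm).some
  have huniv : (Set.univ : Set ι) = ⋃ k : ULift.{v} ℕ, {α : ι | n α = k.down} := by
    ext α
    simp only [Set.mem_univ, Set.mem_iUnion, Set.mem_setOf_eq, true_iff]
    exact ⟨ULift.up (n α), rfl⟩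
  have hle := Cardinal.mk_iUnion_le (fun k : ULift.{v} ℕ => {α : ι | n α = k.down})
  rw [← huniv, Cardinal.mk_univ] at hle
  have hsup : (⨆ k : ULift.{v} ℕ, Cardinal.mk {α : ι | n α = k.down}) < Cardinal.mk ι := by
    refine Ordinal.iSup_lt ?_ ?_
    · rw [Cardinal.mk_eq_aleph0]; exact hκ
    · intro k; exact hlt k.down
  have hmul : Cardinal.mk (ULift.{v} ℕ) * (⨆ k : ULift.{v} ℕ, Cardinal.mk {α : ι | n α = k.down})
      < Cardinal.mk ι := by
    refine Cardinal.mul_lt_of_lt haleph ?_ hsup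
    rw [Cardinal.mk_eq_aleph0]
    exact hκ.trans_le (Ordinal.cof_ord_le _)
  exact absurd (hle.trans_lt hmul) (lt_irrefl _)

end AuxCard

section EmbedLp

variable {ι : Type v} {P : ι → Prop} (e : ι ≃ {α : ι // P α})

def embFun : ι → ι := fun γ => (e γ : ι)

lemma embFun_injective : Function.Injective (embFun e) :=
  fun _ _ h => e.injective (Subtype.coe_injective h)

lemma embFun_prop (γ : ι) : P (embFun e γ) := (e γ).2

lemma exists_embFun_eq {β : ι} (h : P β) : ∃ γ, embFun e γ = β :=
  ⟨e.symm ⟨β, h⟩, by simp [embFun]⟩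

def JFun (g : ι → ℝ) : ι → ℝ := Function.extend (embFun e) g 0

lemma JFun_apply (g : ι → ℝ) (γ : ι) : JFun e g (embFun e γ) = g γ :=
  (embFun_injective e).extend_apply _ _ _

lemma JFun_apply_notP (g : ι → ℝ) {β : ι} (h : ¬ P β) : JFun e g β = 0 := by
  have hne : ¬ ∃ γ, embFun e γ = β := by
    rintro ⟨γ, rfl⟩; exact h (embFun_prop e γ)
  rw [JFun, Function.extend_apply' _ _ _ hne]
  rfl

lemma JFun_norm (g : ι → ℝ) :
    (fun β => ‖JFun e g β‖) = Function.extend (embFun e) (fun γ => ‖g γ‖) 0 := by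
  funext β
  by_cases hβ : ∃ γ, embFun e γ = β
  · obtain ⟨γ, rfl⟩ := hβ
    rw [JFun_apply, (embFun_injective e).extend_apply]
  · have hP : ¬ P β := fun h => hβ (exists_embFun_eq e h)
    rw [JFun_apply_notP e g hP, Function.extend_apply' _ _ _ hβ]
    simp

lemma lp_one_norm {κ : Type*} (g : lp (fun _ : κ => ℝ) 1) : ‖g‖ = ∑' i, ‖g i‖ := by
  have := lp.norm_eq_tsum_rpow (p := 1) (by norm_num) g
  simpa using this

lemma lp_one_summable {κ : Type*} (g : lp (fun _ : κ => ℝ) 1) :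
    Summable fun i => ‖g i‖ := by
  have := (lp.memℓp g).summable (p := 1) (by norm_num)
  simpa using this

lemma memℓp_JFun (g : lp (fun _ : ι => ℝ) 1) : Memℓp (JFun e ⇑g) 1 := by
  apply memℓp_gen
  simp only [ENNReal.toReal_one, Real.rpow_one]
  refine ((summable_extend_zero (embFun_injective e)).2 (lp_one_summable g)).congr fun β => ?_
  exact (congrFun (JFun_norm e ⇑g) β).symm

lemma JFun_tsum_norm (g : lp (fun _ : ι => ℝ) 1) :
    (∑' β, ‖JFun e (⇑g) β‖) = ∑' γ, ‖g γ‖ := by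
  refine ((embFun_injective e).tsum_eq ?_).symm.trans ?_
  · intro β hβ
    by_contra hr
    have hP : ¬ P β := fun h => hr (exists_embFun_eq e h)
    rw [Function.mem_support, JFun_apply_notP e _ hP] at hβ
    simp at hβ
  · exact tsum_congr fun γ => by rw [JFun_apply]

def Jmap : lp (fun _ : ι => ℝ) 1 →ₗᵢ[ℝ] lp (fun _ : ι => ℝ) 1 where
  toFun g := ⟨JFun e ⇑g, memℓp_JFun e g⟩
  map_add' g g' := by
    apply lp.ext
    funext β
    by_cases hβ : ∃ γ, embFun e γ = β
    · obtain ⟨γ, rfl⟩ := hβ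
      show JFun e (⇑(g + g')) (embFun e γ) = JFun e ⇑g (embFun e γ) + JFun e ⇑g' (embFun e γ)
      rw [JFun_apply, JFun_apply, JFun_apply, lp.coeFn_add]
      rfl
    · have hP : ¬ P β := fun h => hβ (exists_embFun_eq e h)
      show JFun e (⇑(g + g')) β = JFun e ⇑g β + JFun e ⇑g' β
      rw [JFun_apply_notP e _ hP, JFun_apply_notP e _ hP, JFun_apply_notP e _ hP, add_zero]
  map_smul' c g := by
    apply lp.ext
    funext β
    by_cases hβ : ∃ γ, embFun e γ = β
    · obtain ⟨γ, rfl⟩ := hβ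
      show JFun e (⇑(c • g)) (embFun e γ) = c • JFun e ⇑g (embFun e γ)
      rw [JFun_apply, JFun_apply, lp.coeFn_smul]
      rfl
    · have hP : ¬ P β := fun h => hβ (exists_embFun_eq e h)
      show JFun e (⇑(c • g)) β = c • JFun e ⇑g β
      rw [JFun_apply_notP e _ hP, JFun_apply_notP e _ hP, smul_zero]
  norm_map' g := by
    show ‖(⟨JFun e ⇑g, memℓp_JFun e g⟩ : lp (fun _ : ι => ℝ) 1)‖ = ‖g‖
    rw [lp_one_norm, lp_one_norm]
    exact JFun_tsum_norm e g

lemma Jmap_single [DecidableEq ι] (γ : ι) (r : ℝ) :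
    Jmap e (lp.single 1 γ r) = lp.single 1 (embFun e γ) r := by
  apply lp.ext
  have h1 : ⇑((Jmap e) (lp.single 1 γ r)) = JFun e ⇑(lp.single 1 γ r) := rfl
  rw [h1]
  funext β
  show JFun e (⇑(lp.single 1 γ r)) β = (lp.single 1 (embFun e γ) r : lp (fun _ : ι => ℝ) 1) β
  by_cases hβ : ∃ γ', embFun e γ' = β
  · obtain ⟨γ', rfl⟩ := hβ
    rw [JFun_apply]
    by_cases hγ : γ' = γ
    · subst hγ
      rw [lp.single_apply_self, lp.single_apply_self]
    · rw [lp.single_apply_ne _ _ _ hγ,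
        lp.single_apply_ne _ _ _ (fun h => hγ (embFun_injective e h))]
  · have hP : ¬ P β := fun h => hβ (exists_embFun_eq e h)
    rw [JFun_apply_notP e _ hP,
      lp.single_apply_ne _ _ _ (fun h => hβ ⟨γ, h.symm⟩)]

end EmbedLp


/-- For a cardinal `κ` of uncountable cofinality and any Banach space `X`,
`𝒮_{ℓ_1(κ)}(X)` is σ-SOT closed. -/
theorem sz_ell1_sigmaSOTClosed {X : Type u} [NormedAddCommGroup X] [NormedSpace ℝ X]
    [CompleteSpace X] {ικ : Type v}
    (hκ : Cardinal.aleph0 < (Cardinal.mk ικ).ord.cof)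
    (T : ℕ → X →L[ℝ] X) (hT : ∀ n, T n ∈ SZ (ellp ικ 1) X)
    (T₀ : X →L[ℝ] X) (hconv : SOTConvergesTo T T₀) :
    T₀ ∈ SZ (ellp ικ 1) X := by
  classical
  intro hpc
  obtain ⟨W, hWc, ⟨φ⟩, γ, hγ, hb⟩ := hpc
  set φL : ↥W →L[ℝ] ellp ικ 1 := (φ : ↥W →L[ℝ] ellp ικ 1) with hφL
  have hden : (0:ℝ) < ‖φL‖ + 1 := by positivity
  set ε : ℝ := γ / (2 * (‖φL‖ + 1)) with hε
  have hεpos : 0 < ε := by positivity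
  set x : ικ → X := fun α => ((φ.symm (lp.single 1 α 1) : ↥W) : X) with hx
  have hchoice : ∀ α : ικ, ∃ m : ℕ, ‖T m (x α) - T₀ (x α)‖ < ε := by
    intro α
    obtain ⟨N, hN⟩ := Metric.tendsto_atTop.mp (hconv (x α)) ε hεpos
    exact ⟨N, by simpa [dist_eq_norm] using hN N le_rfl⟩
  choose n hn using hchoice
  obtain ⟨k, ⟨e⟩⟩ := exists_big_fiber hκ n
  set J := Jmap e with hJ
  set ι' : ellp ικ 1 →L[ℝ] X :=
    (W.subtypeL.comp (φ.symm : ellp ικ 1 →L[ℝ] ↥W)).comp J.toContinuousLinearMap with hι'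
  have hι'apply : ∀ g : ellp ικ 1, ι' g = ((φ.symm (J g) : ↥W) : X) := fun g => rfl
  have hsingle : ∀ (γ' : ικ) (r : ℝ), ι' (lp.single 1 γ' r) = r • x (embFun e γ') := by
    intro γ' r
    rw [hι'apply, hJ, Jmap_single]
    have h2 : lp.single (E := fun _ : ικ => ℝ) 1 (embFun e γ') r
        = r • lp.single 1 (embFun e γ') 1 := by
      rw [← lp.single_smul]
      norm_num
    rw [h2, map_smul, hx]
    simp
  have hSx : ∀ γ' : ικ, ‖(T k) (x (embFun e γ')) - T₀ (x (embFun e γ'))‖ ≤ ε := by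
    intro γ'
    have h1 := hn (embFun e γ')
    have h2 : n (embFun e γ') = k := embFun_prop e γ'
    rw [h2] at h1
    exact h1.le
  set S : X →L[ℝ] X := T k - T₀ with hS
  have hSapp : ∀ y : X, S y = T k y - T₀ y := fun y => rfl
  have hpert : ∀ g : ellp ικ 1, ‖T k (ι' g) - T₀ (ι' g)‖ ≤ ε * ‖g‖ := by
    intro g
    have hsum : HasSum (fun γ' : ικ => lp.single 1 γ' (g γ')) g :=
      lp.hasSum_single (by norm_num) g
    have hsum2 : HasSum (fun γ' : ικ => (S.comp ι') (lp.single 1 γ' (g γ')))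
        ((S.comp ι') g) := (S.comp ι').hasSum hsum
    have htermnorm : ∀ γ' : ικ, ‖(S.comp ι') (lp.single 1 γ' (g γ'))‖ ≤ ‖g γ'‖ * ε := by
      intro γ'
      have h1 : (S.comp ι') (lp.single 1 γ' (g γ')) = (g γ') • S (x (embFun e γ')) := by
        rw [ContinuousLinearMap.comp_apply, hsingle, map_smul]
      rw [h1, norm_smul]
      exact mul_le_mul_of_nonneg_left (le_trans (le_of_eq (by rw [hSapp])) (hSx γ'))
        (norm_nonneg _)
    have hsummaj : Summable fun γ' : ικ => ‖g γ'‖ * ε := (lp_one_summable g).mul_right ε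
    have hsummable : Summable fun γ' : ικ => ‖(S.comp ι') (lp.single 1 γ' (g γ'))‖ :=
      Summable.of_nonneg_of_le (fun _ => norm_nonneg _) htermnorm hsummaj
    calc ‖T k (ι' g) - T₀ (ι' g)‖ = ‖(S.comp ι') g‖ := rfl
      _ = ‖∑' γ' : ικ, (S.comp ι') (lp.single 1 γ' (g γ'))‖ := by rw [hsum2.tsum_eq]
      _ ≤ ∑' γ' : ικ, ‖(S.comp ι') (lp.single 1 γ' (g γ'))‖ := norm_tsum_le_tsum_norm hsummable
      _ ≤ ∑' γ' : ικ, ‖g γ'‖ * ε := Summable.tsum_le_tsum htermnorm hsummable hsummaj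
      _ = (∑' γ' : ικ, ‖g γ'‖) * ε := tsum_mul_right
      _ = ε * ‖g‖ := by rw [lp_one_norm]; ring
  have hlow : ∀ g : ellp ικ 1, ‖g‖ ≤ (‖φL‖ + 1) * ‖ι' g‖ := by
    intro g
    have h1 : ‖g‖ = ‖J g‖ := (J.norm_map g).symm
    have h2 : (J g) = φ (φ.symm (J g)) := (φ.apply_symm_apply _).symm
    have h3 : ‖φ (φ.symm (J g))‖ ≤ ‖φL‖ * ‖φ.symm (J g)‖ := φL.le_opNorm _
    have h4 : ‖ι' g‖ = ‖φ.symm (J g)‖ := by rw [hι'apply]; rfl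
    have h5 : (0:ℝ) ≤ ‖φ.symm (J g)‖ := norm_nonneg _
    calc ‖g‖ = ‖J g‖ := h1
      _ = ‖φ (φ.symm (J g))‖ := congrArg norm h2
      _ ≤ ‖φL‖ * ‖φ.symm (J g)‖ := h3
      _ ≤ (‖φL‖ + 1) * ‖φ.symm (J g)‖ :=
          mul_le_mul_of_nonneg_right (by linarith) h5
      _ = (‖φL‖ + 1) * ‖ι' g‖ := by rw [h4]
  have hbelow : ∀ g : ellp ικ 1, (γ/2) * ‖ι' g‖ ≤ ‖T k (ι' g)‖ := by
    intro g
    have hmem : ι' g ∈ W := by rw [hι'apply]; exact SetLike.coe_mem _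
    have h0 := hb _ hmem
    have h1 := hpert g
    have h2 := hlow g
    have hεc : ε * (‖φL‖ + 1) = γ/2 := by
      rw [hε]; field_simp
    have h3 : ‖T₀ (ι' g)‖ - ‖T k (ι' g) - T₀ (ι' g)‖ ≤ ‖T k (ι' g)‖ := by
      have h := norm_sub_norm_le (T₀ (ι' g)) (T k (ι' g))
      rw [norm_sub_rev (T₀ (ι' g))] at h
      linarith
    have h4 : ε * ‖g‖ ≤ (γ/2) * ‖ι' g‖ := by
      calc ε * ‖g‖ ≤ ε * ((‖φL‖ + 1) * ‖ι' g‖) := mul_le_mul_of_nonneg_left h2 hεpos.le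
        _ = (ε * (‖φL‖ + 1)) * ‖ι' g‖ := by ring
        _ = (γ/2) * ‖ι' g‖ := by rw [hεc]
    linarith
  have hbound : ∀ g : ellp ικ 1, ‖g‖ ≤ ((‖φL‖₊ + 1 : ℝ≥0) : ℝ) * ‖ι' g‖ := by
    intro g
    have := hlow g
    simpa [coe_nnnorm] using this
  have hanti : AntilipschitzWith (‖φL‖₊ + 1) ι' := ι'.antilipschitz_of_bound hbound
  have hinj : Function.Injective ι' := hanti.injective
  have hclosedrange : IsClosed (Set.range ι') := hanti.isClosed_range ι'.uniformContinuous
  set W' : Submodule ℝ X := LinearMap.range ι'.toLinearMap with hW'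
  have hW'closed : IsClosed (W' : Set X) := by
    have : (W' : Set X) = Set.range ι' := by
      rw [hW', LinearMap.coe_range]
      rfl
    rw [this]
    exact hclosedrange
  haveI : CompleteSpace W' := hW'closed.completeSpace_coe
  have hinj' : Function.Injective ι'.toLinearMap := hinj
  set eqv : ellp ικ 1 ≃ₗ[ℝ] W' := LinearEquiv.ofInjective ι'.toLinearMap hinj' with heqv
  have hcont : Continuous eqv := continuous_induced_rng.mpr ι'.continuous
  set ceqv := eqv.toContinuousLinearEquivOfContinuous hcont with hceqv
  refine hT k ⟨W', hW'closed, ⟨ceqv.symm⟩, γ/2, by positivity, ?_⟩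
  intro w hw
  obtain ⟨g, rfl⟩ := LinearMap.mem_range.mp hw
  exact hbelow g
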